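/- Let G be a graph with n vertices, λ an eigenvalue of G of multiplicity k > 0, and X ⊂ V(G) a subset. Then X is a λ-star set of G (i.e., the projections P e_j for j ∈ X of the standard basis vectors onto the eigenspace E_G(λ) form a basis of E_G(λ)) if and only if |X| = k and λ is not an eigenvalue of the induced subgraph G − X. -/

import Mathlib

open Matrix

noncomputable def eigSpace {m : Type*} [Fintype m] [DecidableEq m]
    (A : Matrix m m ℝ) (lam : ℝ) : Submodule ℝ (m → ℝ) :=
  LinearMap.ker (Matrix.mulVecLin (A - lam • (1 : Matrix m m ℝ)))

/-- `lam` is an eigenvalue of the real matrix `A`. -/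
def IsEig {m : Type*} [Fintype m] [DecidableEq m] (A : Matrix m m ℝ) (lam : ℝ) : Prop :=
  eigSpace A lam ≠ ⊥

/-- The multiplicity of `lam` as an eigenvalue of `A`. -/
noncomputable def multE {m : Type*} [Fintype m] [DecidableEq m]
    (A : Matrix m m ℝ) (lam : ℝ) : ℕ :=
  Module.finrank ℝ (eigSpace A lam)

/-- `lam` is a main eigenvalue of `A`: its eigenspace is not orthogonal to the all-ones
vector. -/
def IsMainEig {m : Type*} [Fintype m] [DecidableEq m] (A : Matrix m m ℝ) (lam : ℝ) : Prop :=
  ∃ x ∈ eigSpace A lam, ∑ i, x i ≠ 0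

/-- The adjacency matrix of the subgraph of `G` induced by the vertex set `S`. -/
def indMatrix {n : ℕ} (G : SimpleGraph (Fin n)) [DecidableRel G.Adj] (S : Finset (Fin n)) :
    Matrix S S ℝ :=
  (G.adjMatrix ℝ).submatrix (fun i => (i : Fin n)) (fun j => (j : Fin n))

/-- `X` is a `lam`-star set of `G`: its cardinality equals the multiplicity of `lam`
and `lam` is not an eigenvalue of the subgraph induced by the complement of `X`. -/
def IsStarSet {n : ℕ} (G : SimpleGraph (Fin n)) [DecidableRel G.Adj] (lam : ℝ)
    (X : Finset (Fin n)) : Prop :=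
  X.card = multE (G.adjMatrix ℝ) lam ∧ ¬ IsEig (indMatrix G Xᶜ) lam

/-- The block `N` of the adjacency matrix: rows indexed by `Xᶜ`, columns by `X`. -/
def Nmat {n : ℕ} (G : SimpleGraph (Fin n)) [DecidableRel G.Adj] (X : Finset (Fin n)) :
    Matrix ↥(Xᶜ) ↥X ℝ :=
  (G.adjMatrix ℝ).submatrix (fun i => (i : Fin n)) (fun j => (j : Fin n))

/-- The block `C` of the adjacency matrix: the adjacency matrix of `G - X`. -/
def Cmat {n : ℕ} (G : SimpleGraph (Fin n)) [DecidableRel G.Adj] (X : Finset (Fin n)) :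
    Matrix ↥(Xᶜ) ↥(Xᶜ) ℝ :=
  indMatrix G Xᶜ

/-- The eigenspace of lam, viewed inside Euclidean space (so that the orthogonal
projection onto it is available). -/
noncomputable def eigSpaceE {n : ℕ} (A : Matrix (Fin n) (Fin n) ℝ) (lam : ℝ) :
    Submodule ℝ (EuclideanSpace ℝ (Fin n)) :=
  LinearMap.ker (Matrix.toEuclideanLin (A - lam • (1 : Matrix (Fin n) (Fin n) ℝ)))

lemma mem_eigSpaceE_iff {n : ℕ} (A : Matrix (Fin n) (Fin n) ℝ) (lam : ℝ)
    (x : EuclideanSpace ℝ (Fin n)) :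
    x ∈ eigSpaceE A lam ↔ (A - lam • 1) *ᵥ (WithLp.equiv 2 _ x) = 0 := by
  rw [eigSpaceE, LinearMap.mem_ker, Matrix.toEuclideanLin_apply]
  exact ⟨fun h => congrArg WithLp.ofLp h, fun h => by rw [WithLp.equiv_apply] at h; rw [h]; rfl⟩

example {n : ℕ} (x : EuclideanSpace ℝ (Fin n)) (j : Fin n) : x j = (WithLp.equiv 2 _ x) j := rfl

lemma eigSpace_map {n : ℕ} (A : Matrix (Fin n) (Fin n) ℝ) (lam : ℝ) :
    eigSpace A lam = (eigSpaceE A lam).map (WithLp.linearEquiv 2 ℝ (Fin n → ℝ)).toLinearMap := by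
  ext x
  simp only [Submodule.mem_map]
  constructor
  · intro hx
    exact ⟨(WithLp.equiv 2 _).symm x, by rw [mem_eigSpaceE_iff]; simpa [eigSpace, Matrix.sub_mulVec, Matrix.smul_mulVec, Matrix.one_mulVec] using hx, rfl⟩
  · rintro ⟨y, hy, rfl⟩
    rw [mem_eigSpaceE_iff] at hy
    simpa [eigSpace, Matrix.sub_mulVec, Matrix.smul_mulVec, Matrix.one_mulVec] using hy

lemma finrank_eigSpaceE {n : ℕ} (A : Matrix (Fin n) (Fin n) ℝ) (lam : ℝ) :
    Module.finrank ℝ (eigSpaceE A lam) = Module.finrank ℝ (eigSpace A lam) := by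
  rw [eigSpace_map]
  exact (LinearEquiv.finrank_map_eq _ _).symm


variable {n : ℕ}

lemma mem_eigSpace_iff {m : Type*} [Fintype m] [DecidableEq m] (A : Matrix m m ℝ) (lam : ℝ)
    (x : m → ℝ) : x ∈ eigSpace A lam ↔ (A - lam • 1) *ᵥ x = 0 := Iff.rfl

/-- extension by zero as a linear map -/
def extL (X : Finset (Fin n)) : (↥(Xᶜ) → ℝ) →ₗ[ℝ] (Fin n → ℝ) where
  toFun x := fun i => if h : i ∈ Xᶜ then x ⟨i, h⟩ else 0
  map_add' x y := by funext i; by_cases h : i ∈ X <;> simp [h, Finset.mem_compl]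
  map_smul' c x := by funext i; by_cases h : i ∈ X <;> simp [h, Finset.mem_compl]

lemma extL_mem (X : Finset (Fin n)) (x : ↥(Xᶜ) → ℝ) (i : Fin n) (h : i ∈ Xᶜ) :
    extL X x i = x ⟨i, h⟩ := dif_pos h

lemma extL_nmem (X : Finset (Fin n)) (x : ↥(Xᶜ) → ℝ) (i : Fin n) (h : i ∈ X) :
    extL X x i = 0 := dif_neg (by simpa using h)

lemma extL_inj (X : Finset (Fin n)) : Function.Injective (extL X) := by
  intro x y h
  funext i
  have := congrFun h (i : Fin n)
  rwa [extL_mem X x i i.2, extL_mem X y i i.2] at this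

lemma mulVec_restrict (G : SimpleGraph (Fin n)) [DecidableRel G.Adj] (lam : ℝ)
    (X : Finset (Fin n)) (x : Fin n → ℝ) (hx : ∀ j ∈ X, x j = 0) (j : Fin n) (hj : j ∈ Xᶜ) :
    ((G.adjMatrix ℝ - lam • 1) *ᵥ x) j
      = ((indMatrix G Xᶜ - lam • (1 : Matrix ↥(Xᶜ) ↥(Xᶜ) ℝ)) *ᵥ (fun i : ↥(Xᶜ) => x i)) ⟨j, hj⟩ := by
  simp only [mulVec, dotProduct]
  rw [← Finset.sum_add_sum_compl X]
  rw [Finset.sum_eq_zero (fun i hi => by rw [hx i hi, mul_zero]), zero_add]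
  rw [← Finset.sum_coe_sort]
  apply Finset.sum_congr rfl
  intro i _
  congr 1
  simp only [Matrix.sub_apply, Matrix.smul_apply, Matrix.one_apply, indMatrix,
    Matrix.submatrix_apply]
  congr 1
  by_cases h : j = (i : Fin n)
  · rw [if_pos h, if_pos (Subtype.ext h)]
  · rw [if_neg h, if_neg (fun hc => h (congrArg Subtype.val hc))]

lemma inj_of_notEig (G : SimpleGraph (Fin n)) [DecidableRel G.Adj] (lam : ℝ)
    (X : Finset (Fin n)) (h : ¬ IsEig (indMatrix G Xᶜ) lam) :
    ∀ x ∈ eigSpace (G.adjMatrix ℝ) lam, (∀ j ∈ X, x j = 0) → x = 0 := by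
  intro x hx hx0
  have hbot : eigSpace (indMatrix G Xᶜ) lam = ⊥ := not_not.mp h
  have hx' : (fun i : ↥(Xᶜ) => x i) ∈ eigSpace (indMatrix G Xᶜ) lam := by
    rw [mem_eigSpace_iff]
    funext i
    rw [← mulVec_restrict G lam X x hx0 i i.2]
    have := (mem_eigSpace_iff _ _ _).mp hx
    rw [this]; rfl
  rw [hbot, Submodule.mem_bot] at hx'
  funext i
  by_cases hi : i ∈ X
  · exact hx0 i hi
  · exact congrFun hx' ⟨i, Finset.mem_compl.mpr hi⟩

lemma notEig_of_inj (G : SimpleGraph (Fin n)) [DecidableRel G.Adj] (lam : ℝ)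
    (X : Finset (Fin n)) (hcard : X.card = multE (G.adjMatrix ℝ) lam)
    (hinj : ∀ x ∈ eigSpace (G.adjMatrix ℝ) lam, (∀ j ∈ X, x j = 0) → x = 0) :
    ¬ IsEig (indMatrix G Xᶜ) lam := by
  set M : Matrix (Fin n) (Fin n) ℝ := G.adjMatrix ℝ - lam • 1 with hM
  have hMs : Mᵀ = M := by
    rw [hM, Matrix.transpose_sub, Matrix.transpose_smul, Matrix.transpose_one,
      SimpleGraph.transpose_adjMatrix]
  set T : (Fin n → ℝ) →ₗ[ℝ] (Fin n → ℝ) := M.mulVecLin with hT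
  have hkerT : LinearMap.ker T = eigSpace (G.adjMatrix ℝ) lam := rfl
  set T₀ : (↥(Xᶜ) → ℝ) →ₗ[ℝ] (Fin n → ℝ) := T ∘ₗ extL X with hT0
  have hker0 : LinearMap.ker T₀ = ⊥ := by
    rw [eq_bot_iff]
    intro x hx
    rw [Submodule.mem_bot]
    refine extL_inj X (a₂ := 0) ?_
    rw [map_zero]
    apply hinj _ _ (fun j hj => extL_nmem X x j hj)
    rw [← hkerT]
    exact hx
  have h1 : Module.finrank ℝ (LinearMap.range T₀) = n - X.card := by
    have := LinearMap.finrank_range_add_finrank_ker T₀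
    rw [hker0, finrank_bot, add_zero, Module.finrank_pi, Fintype.card_coe,
      Finset.card_compl, Fintype.card_fin] at this
    exact this
  have h2 : Module.finrank ℝ (LinearMap.range T) = n - X.card := by
    have := LinearMap.finrank_range_add_finrank_ker T
    rw [hkerT, Module.finrank_pi, Fintype.card_fin] at this
    have hc2 : X.card = Module.finrank ℝ (eigSpace (G.adjMatrix ℝ) lam) := hcard
    omega
  have hle : LinearMap.range T₀ ≤ LinearMap.range T := LinearMap.range_comp_le_range _ _
  have heq : LinearMap.range T₀ = LinearMap.range T :=
    Submodule.eq_of_le_of_finrank_le hle (by rw [h1, h2])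
  intro hIs
  apply hIs
  rw [eq_bot_iff]
  intro x' hx'
  rw [Submodule.mem_bot]
  set v : Fin n → ℝ := extL X x' with hv
  have hv0 : ∀ j ∈ X, v j = 0 := fun j hj => extL_nmem X x' j hj
  have hveq : (fun i : ↥(Xᶜ) => v i) = x' := funext fun i => extL_mem X x' i i.2
  have hv1 : ∀ j ∈ Xᶜ, (M *ᵥ v) j = 0 := by
    intro j hj
    rw [show (M *ᵥ v) j = ((G.adjMatrix ℝ - lam • 1) *ᵥ v) j from rfl,
      mulVec_restrict G lam X v hv0 j hj, hveq]
    exact congrFun ((mem_eigSpace_iff _ _ _).mp hx') ⟨j, hj⟩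
  have hv2 : M *ᵥ v = 0 := by
    funext i
    by_cases hi : i ∈ X
    · obtain ⟨y, hy⟩ : M *ᵥ Pi.single i 1 ∈ LinearMap.range T₀ := by
        rw [heq]; exact ⟨Pi.single i 1, rfl⟩
      have e1 : (M *ᵥ v) i = (M *ᵥ Pi.single i 1) ⬝ᵥ v := by
        rw [Matrix.mulVec_single]
        simp only [mulVec, dotProduct]
        apply Finset.sum_congr rfl
        intro j _
        rw [Pi.smul_apply, Matrix.col_apply, MulOpposite.op_one, one_smul, show M j i = M i j from congrFun (congrFun hMs i) j]
      have symmdot : ∀ u w : Fin n → ℝ, u ⬝ᵥ (M *ᵥ w) = w ⬝ᵥ (M *ᵥ u) := by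
        intro u w
        rw [dotProduct_mulVec]
        nth_rewrite 1 [← hMs]
        rw [vecMul_transpose, dotProduct_comm]
      have e2 : (M *ᵥ Pi.single i 1) ⬝ᵥ v = extL X y ⬝ᵥ (M *ᵥ v) := by
        rw [dotProduct_comm, ← hy, hT0, LinearMap.comp_apply, hT, mulVecLin_apply, symmdot]
      have e3 : extL X y ⬝ᵥ (M *ᵥ v) = 0 := by
        apply Finset.sum_eq_zero
        intro j _
        by_cases hj : j ∈ X
        · rw [extL_nmem X y j hj, zero_mul]
        · rw [hv1 j (Finset.mem_compl.mpr hj), mul_zero]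
      rw [e1, e2, e3]; rfl
    · exact hv1 i (Finset.mem_compl.mpr hi)
  have hv3 : v = 0 := hinj v hv2 hv0
  refine extL_inj X (a₂ := 0) ?_
  rw [map_zero]
  exact hv3


section Glue
variable {n : ℕ}

lemma span_iff_inj (A : Matrix (Fin n) (Fin n) ℝ) (lam : ℝ) (X : Finset (Fin n))
    (f : ↥X → ↥(eigSpaceE A lam))
    (hfd : ∀ j : ↥X, f j = Submodule.orthogonalProjectionOnto (eigSpaceE A lam)
      (EuclideanSpace.single (j : Fin n) (1:ℝ))) :
    (⊤ ≤ Submodule.span ℝ (Set.range f)) ↔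
      (∀ x ∈ eigSpace A lam, (∀ j ∈ X, x j = 0) → x = 0) := by
  have hinner : ∀ (j : ↥X) (y : ↥(eigSpaceE A lam)),
      (inner ℝ (f j) y : ℝ) = (y : EuclideanSpace ℝ (Fin n)) (j : Fin n) := by
    intro j y
    have h0 : (inner ℝ (f j) y : ℝ)
        = inner ℝ ((f j : EuclideanSpace ℝ (Fin n))) (y : EuclideanSpace ℝ (Fin n)) := rfl
    rw [hfd, Submodule.inner_orthogonalProjectionOnto_eq_of_mem_right,
      EuclideanSpace.inner_single_left]
    simp
  constructor
  · intro hsp x hx hx0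
    set xe : EuclideanSpace ℝ (Fin n) := (WithLp.equiv 2 _).symm x with hxe
    have hmem : xe ∈ eigSpaceE A lam := by
      rw [mem_eigSpaceE_iff]
      exact hx
    set y : ↥(eigSpaceE A lam) := ⟨xe, hmem⟩ with hy
    have hcoord : ∀ j : ↥X, (inner ℝ (f j) y : ℝ) = 0 := by
      intro j
      rw [hinner j y]
      exact hx0 (j : Fin n) j.2
    have hortho : Submodule.span ℝ {y} ≤ (Submodule.span ℝ (Set.range f))ᗮ := by
      apply Submodule.isOrtho_span.mpr
      rintro u hu v ⟨j, rfl⟩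
      rcases Set.mem_singleton_iff.mp hu with rfl
      rw [real_inner_comm]
      exact hcoord j
    have hy0 : y = 0 := by
      have h1 : y ∈ (Submodule.span ℝ (Set.range f))ᗮ :=
        hortho (Submodule.mem_span_singleton_self y)
      have h2 : (Submodule.span ℝ (Set.range f))ᗮ ≤ (⊤ : Submodule ℝ _)ᗮ :=
        Submodule.orthogonal_le hsp
      rw [Submodule.top_orthogonal_eq_bot] at h2
      exact Submodule.mem_bot _ |>.mp (h2 h1)
    have hxe0 : xe = 0 := by
      rw [hy] at hy0
      exact Subtype.ext_iff.mp hy0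
    exact congrArg (⇑(WithLp.equiv 2 (Fin n → ℝ))) hxe0
  · intro hinj
    have hbot : (Submodule.span ℝ (Set.range f))ᗮ = ⊥ := by
      rw [eq_bot_iff]
      intro y hy
      rw [Submodule.mem_bot]
      have hcoord : ∀ j ∈ X, ((y : EuclideanSpace ℝ (Fin n)) : Fin n → ℝ) j = 0 := by
        intro j hj
        have := (Submodule.mem_orthogonal _ _).mp hy (f ⟨j, hj⟩)
          (Submodule.subset_span (Set.mem_range_self _))
        rw [hinner] at this
        exact this
      have hx : (WithLp.equiv 2 (Fin n → ℝ)) (y : EuclideanSpace ℝ (Fin n)) ∈ eigSpace A lam :=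
        (mem_eigSpaceE_iff A lam _).mp y.2
      have h9 := hinj _ hx hcoord
      apply Subtype.ext
      exact congrArg (⇑(WithLp.equiv 2 (Fin n → ℝ)).symm) h9
    rw [Submodule.orthogonal_eq_bot_iff] at hbot
    exact hbot.ge

end Glue

set_option maxHeartbeats 800000 in
theorem stmt0 {n : ℕ} (G : SimpleGraph (Fin n)) [DecidableRel G.Adj] (lam : ℝ)
    (k : ℕ) (hk : k = multE (G.adjMatrix ℝ) lam) (hk0 : 0 < k)
    (X : Finset (Fin n)) (hX : X ⊂ Finset.univ) :
    (∃ b : Module.Basis ↥X ℝ ↥(eigSpaceE (G.adjMatrix ℝ) lam),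
        ∀ j : ↥X, b j =
          Submodule.orthogonalProjectionOnto (eigSpaceE (G.adjMatrix ℝ) lam)
            (EuclideanSpace.single (j : Fin n) (1 : ℝ))) ↔
      (X.card = k ∧ ¬ IsEig (indMatrix G Xᶜ) lam) := by
  classical
  set A : Matrix (Fin n) (Fin n) ℝ := G.adjMatrix ℝ with hA
  set f : ↥X → ↥(eigSpaceE A lam) := fun j =>
    Submodule.orthogonalProjectionOnto (eigSpaceE A lam) (EuclideanSpace.single (j : Fin n) (1:ℝ)) with hf
  have hfd : ∀ j : ↥X, f j = Submodule.orthogonalProjectionOnto (eigSpaceE A lam)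
      (EuclideanSpace.single (j : Fin n) (1:ℝ)) := fun j => rfl
  have hfr : Module.finrank ℝ (eigSpaceE A lam) = k := by
    rw [finrank_eigSpaceE]
    exact hk.symm
  have hiff := span_iff_inj A lam X f hfd
  constructor
  · rintro ⟨b, hb⟩
    have hcard : X.card = k := by
      rw [← Fintype.card_coe, ← hfr, Module.finrank_eq_card_basis b]
    have hrange : Set.range b = Set.range f :=
      congrArg Set.range (funext fun j => (hb j).trans (hfd j).symm)
    have hsp : ⊤ ≤ Submodule.span ℝ (Set.range f) := by
      rw [← hrange, b.span_eq]
    exact ⟨hcard, notEig_of_inj G lam X (hcard.trans hk) (hiff.mp hsp)⟩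
  · rintro ⟨hcard, hnotEig⟩
    have hsp : ⊤ ≤ Submodule.span ℝ (Set.range f) :=
      hiff.mpr (inj_of_notEig G lam X hnotEig)
    have hcards : Fintype.card ↥X = Module.finrank ℝ (eigSpaceE A lam) := by
      rw [Fintype.card_coe, hcard, hfr]
    exact ⟨basisOfTopLeSpanOfCardEqFinrank f hsp hcards,
      fun j => by rw [coe_basisOfTopLeSpanOfCardEqFinrank]⟩
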